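/- Let t ≥ 3 and l ≥ 1 be integers. Then every member graph G of the family 𝖦(t,l) has lambda chromatic number exactly t. -/
import Mathlib


/-- A lambda colouring (`L(2,1)`-colouring) of a simple graph: adjacent vertices get
values at least 2 apart, and vertices at distance 2 get distinct values. -/
def IsLambdaColoring {V : Type*} (G : SimpleGraph V) (c : V → ℕ) : Prop :=
  (∀ u v, G.Adj u v → 2 ≤ Nat.dist (c u) (c v)) ∧
  (∀ u v, G.dist u v = 2 → c u ≠ c v)

/-- The lambda chromatic number: the minimum over all lambda colourings of the
maximum assigned value. -/
noncomputable def lambdaChromatic {V : Type*} [Fintype V] (G : SimpleGraph V) : ℕ :=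
  sInf {t : ℕ | ∃ c : V → ℕ, IsLambdaColoring G c ∧ ∀ v, c v ≤ t}

/-- `G` is a member of the family `𝖦(t,l)` with partition `part : V → {0,…,t}`:
each class has size `l`; edges only join classes `m, p` with `|m − p| ≥ 2`; and between
any two such classes, the edges form a perfect matching. -/
def MemGFamily {V : Type*} (G : SimpleGraph V) (t l : ℕ) (part : V → ℕ) : Prop :=
  (∀ v, part v ≤ t) ∧
  (∀ m ≤ t, {v | part v = m}.ncard = l) ∧
  (∀ u v, G.Adj u v → 2 ≤ Nat.dist (part u) (part v)) ∧
  (∀ m p, m ≤ t → p ≤ t → 2 ≤ Nat.dist m p →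
    ∀ x, part x = m → ∃! y, part y = p ∧ G.Adj x y)

/-- Every member graph `G` of the family `𝖦(t,l)` (for `t ≥ 3`, `l ≥ 1`) has lambda
chromatic number exactly `t`. -/
theorem stmt_3 {V : Type*} [Fintype V] (G : SimpleGraph V) (t l : ℕ)
    (ht : 3 ≤ t) (hl : 1 ≤ l) (part : V → ℕ) (hG : MemGFamily G t l part) :
    lambdaChromatic G = t := by
  obtain ⟨h1, h2, h3, h4⟩ := hG
  -- upper bound: `part` itself is a lambda colouring
  have hmem : t ∈ {s : ℕ | ∃ c : V → ℕ, IsLambdaColoring G c ∧ ∀ v, c v ≤ s} := by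
    refine ⟨part, ⟨h3, ?_⟩, h1⟩
    intro u v hdist hc
    -- get a walk of length 2 from u to v
    obtain ⟨p, hp⟩ := SimpleGraph.exists_walk_of_dist_ne_zero (by omega : G.dist u v ≠ 0)
    rw [hdist] at hp
    cases p with
    | nil => simp at hp
    | @cons _ x _ h q =>
      cases q with
      | nil => simp at hp
      | @cons _ y _ h' q' =>
        cases q' with
        | nil =>
          -- u - x - v path, with x the middle vertex
          have hwm : 2 ≤ Nat.dist (part x) (part u) := by
            have := h3 u x h; rwa [Nat.dist_comm] at this
          have hu : u ≠ v := by
            intro he; subst he; simp [SimpleGraph.dist_self] at hdist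
          obtain ⟨z, _, hz⟩ := h4 (part x) (part u) (h1 x) (h1 u) hwm x rfl
          exact hu ((hz u ⟨rfl, h.symm⟩).trans (hz v ⟨hc.symm, h'⟩).symm)
        | cons h'' q'' => simp [SimpleGraph.Walk.length_cons] at hp
  -- lower bound
  have hlow : ∀ s ∈ {s : ℕ | ∃ c : V → ℕ, IsLambdaColoring G c ∧ ∀ v, c v ≤ s}, t ≤ s := by
    rintro s ⟨c, ⟨hc1, hc2⟩, hcb⟩
    by_contra hst
    push_neg at hst
    -- pick u in class 0
    have h0 : ({v : V | part v = 0}).Nonempty := by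
      apply Set.nonempty_of_ncard_ne_zero
      rw [h2 0 (Nat.zero_le t)]; omega
    obtain ⟨u, hu⟩ := h0
    -- for each p in [2, t], pick the matched neighbour of u in class p
    have hw : ∀ p, 2 ≤ p → p ≤ t → ∃ y, part y = p ∧ G.Adj u y := by
      intro p hp2 hpt
      exact (h4 0 p (Nat.zero_le t) hpt (by simp [Nat.dist]; omega) u hu).exists
    classical
    set w : ℕ → V := fun p => if h : 2 ≤ p ∧ p ≤ t then (hw p h.1 h.2).choose else u with hwdef
    have hwp : ∀ p, 2 ≤ p → p ≤ t → part (w p) = p ∧ G.Adj u (w p) := by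
      intro p hp2 hpt
      simp only [hwdef, dif_pos (And.intro hp2 hpt)]
      exact (hw p hp2 hpt).choose_spec
    -- colours of the w p are pairwise distinct
    have hinj : ∀ p ∈ Finset.Icc 2 t, ∀ q ∈ Finset.Icc 2 t,
        c (w p) = c (w q) → p = q := by
      intro p hp q hq hcc
      simp only [Finset.mem_Icc] at hp hq
      by_contra hpq
      obtain ⟨hp1, hp2⟩ := hwp p hp.1 hp.2
      obtain ⟨hq1, hq2⟩ := hwp q hq.1 hq.2
      have hne : w p ≠ w q := fun he => hpq (by rw [← hp1, ← hq1, he])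
      -- distance between w p and w q is 1 or 2
      have hreach : G.Reachable (w p) (w q) := ⟨(SimpleGraph.Walk.cons hp2.symm
        (SimpleGraph.Walk.cons hq2 SimpleGraph.Walk.nil))⟩
      have hd2 : G.dist (w p) (w q) ≤ 2 := by
        have := SimpleGraph.dist_le (SimpleGraph.Walk.cons hp2.symm
          (SimpleGraph.Walk.cons hq2 SimpleGraph.Walk.nil))
        simpa using this
      have hd0 : G.dist (w p) (w q) ≠ 0 := fun h0 =>
        hne (hreach.dist_eq_zero_iff.mp h0)
      interval_cases hd : (G.dist (w p) (w q))
      · exact hd0 rfl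
      · have hadj : G.Adj (w p) (w q) := SimpleGraph.dist_eq_one_iff_adj.mp hd
        have := hc1 _ _ hadj
        rw [hcc] at this
        simp [Nat.dist_self] at this
      · exact hc2 _ _ hd hcc
    -- target set of possible colours
    set a : ℕ := if c u = 0 then 1 else c u - 1 with ha
    have hau : a ≠ c u := by simp only [ha]; split <;> omega
    have hat : a < t := by
      have h := hcb u
      simp only [ha]; split <;> omega
    have hsub : ∀ p ∈ Finset.Icc 2 t, c (w p) ∈
        Finset.range t \ {c u, a} := by
      intro p hp
      simp only [Finset.mem_Icc] at hp
      obtain ⟨hp1, hp2⟩ := hwp p hp.1 hp.2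
      have hdist2 := hc1 _ _ hp2
      have hb := hcb (w p)
      simp only [Finset.mem_sdiff, Finset.mem_range, Finset.mem_insert,
        Finset.mem_singleton]
      refine ⟨by omega, ?_⟩
      rintro (h | h)
      · rw [h, Nat.dist_self] at hdist2; omega
      · rw [h, show Nat.dist (c u) a = (c u - a) + (a - c u) from rfl] at hdist2
        have : c u - a + (a - c u) = 1 := by simp only [ha]; split <;> omega
        omega
    have hcard := Finset.card_le_card_of_injOn (fun p => c (w p)) hsub hinj
    have hc1' : ({c u, a} : Finset ℕ) ⊆ Finset.range t := by
      intro x hx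
      simp only [Finset.mem_insert, Finset.mem_singleton] at hx
      have := hcb u
      rcases hx with h | h <;> simp [Finset.mem_range] <;> omega
    rw [Finset.card_sdiff_of_subset hc1', Finset.card_range, Nat.card_Icc] at hcard
    have : ({c u, a} : Finset ℕ).card = 2 := by
      rw [Finset.card_insert_of_notMem (by simpa using hau.symm), Finset.card_singleton]
    omega
  exact le_antisymm (Nat.sInf_le hmem) (le_csInf ⟨t, hmem⟩ hlow)
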